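/- For all i, j ∈ {1,…,n}: E[Ĩ_{i,i}·Ĩ_{j,j}] (= Cov(Ĩ_{i,i}, Ĩ_{j,j}), since the Ĩ's are centred) equals (n−2)(n−1)(n+2)/(180n²(n+1)) if i = j, and equals −(n−2)(n+2)/(180n²(n+1)) if i ≠ j. -/

import Mathlib

open MeasureTheory ProbabilityTheory Filter Finset Topology

noncomputable section

/-- The rank `R_i` of `X_i` among `X_1, …, X_n` (as a real number). -/
def rank1 {Ω : Type} {n : ℕ} (X : Fin n → Ω → ℝ) (i : Fin n) (ω : Ω) : ℝ :=
  ∑ j : Fin n, if X j ω ≤ X i ω then (1 : ℝ) else 0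

/-- The quantity `I_{i,j}`. -/
def I1 {Ω : Type} {n : ℕ} (X : Fin n → Ω → ℝ) (i j : Fin n) (ω : Ω) : ℝ :=
  (2 * (n : ℝ) + 1) / (6 * (n : ℝ))
    + rank1 X i ω * (rank1 X i ω - 1) / (2 * (n : ℝ) * ((n : ℝ) + 1))
    + rank1 X j ω * (rank1 X j ω - 1) / (2 * (n : ℝ) * ((n : ℝ) + 1))
    - max (rank1 X i ω) (rank1 X j ω) / ((n : ℝ) + 1)

/-- The centred quantity `Ĩ_{i,j}`. -/
def Itil1 {Ω : Type} {n : ℕ} (X : Fin n → Ω → ℝ) (i j : Fin n) (ω : Ω) : ℝ :=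
  if i = j then I1 X i j ω - (1 / 6 - 1 / (6 * (n : ℝ)))
  else I1 X i j ω + 1 / (6 * (n : ℝ))

/-- The basic model assumptions: measurability, `X_1, …, X_n` are i.i.d. real-valued
random variables, and their common cdf is continuous. -/
def IID1 {Ω : Type} [MeasurableSpace Ω] {n : ℕ} (X : Fin n → Ω → ℝ)
    (P : Measure Ω) : Prop :=
  (∀ i, Measurable (X i)) ∧
  iIndepFun X P ∧
  (∀ i j : Fin n, Measure.map (X i) P = Measure.map (X j) P) ∧
  (∀ i : Fin n, Continuous fun t : ℝ => (P {ω | X i ω ≤ t}).toReal)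

/-- the common centred function of the rank -/
def frk (n : ℕ) (r : ℝ) : ℝ :=
  ((n:ℝ)+2)/(6*n) + r*(r-1-n)/(n*(n+1))

lemma sum_pow1 (m : ℕ) : ∑ r ∈ range m, ((r:ℝ)) = m*(m-1)/2 := by
  induction m with
  | zero => simp
  | succ k ih => rw [Finset.sum_range_succ, ih]; push_cast; ring

lemma sum_pow2 (m : ℕ) : ∑ r ∈ range m, ((r:ℝ))^2 = m*(m-1)*(2*m-1)/6 := by
  induction m with
  | zero => simp
  | succ k ih => rw [Finset.sum_range_succ, ih]; push_cast; ring

lemma sum_pow3 (m : ℕ) : ∑ r ∈ range m, ((r:ℝ))^3 = (m*(m-1)/2)^2 := by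
  induction m with
  | zero => simp
  | succ k ih => rw [Finset.sum_range_succ, ih]; push_cast; ring

lemma sum_pow4 (m : ℕ) : ∑ r ∈ range m, ((r:ℝ))^4 = m*(m-1)*(2*m-1)*(3*m^2-3*m-1)/30 := by
  induction m with
  | zero => simp
  | succ k ih => rw [Finset.sum_range_succ, ih]; push_cast; ring

lemma sum_frk (n : ℕ) (hn : 2 ≤ n) : ∑ r ∈ range n, frk n ((r:ℝ)+1) = 0 := by
  have hn0 : (n:ℝ) ≠ 0 := by positivity
  have hn1 : (n:ℝ)+1 ≠ 0 := by positivity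
  have key : ∀ r : ℝ, frk n (r+1) =
      (((n:ℝ)+1)*((n:ℝ)+2)/6 - n + (1-n)*r + r^2) / (n*(n+1)) := by
    intro r; unfold frk; field_simp; ring
  simp only [key]
  rw [← Finset.sum_div]
  rw [Finset.sum_add_distrib, Finset.sum_add_distrib, ← Finset.mul_sum,
    Finset.sum_const, Finset.card_range, sum_pow1, sum_pow2]
  field_simp
  ring

lemma sum_frk_sq (n : ℕ) (hn : 2 ≤ n) :
    ∑ r ∈ range n, (frk n ((r:ℝ)+1))^2
      = ((n:ℝ)-1)*((n:ℝ)-2)*((n:ℝ)+2)/(180*(n:ℝ)*((n:ℝ)+1)) := by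
  have hn0 : (n:ℝ) ≠ 0 := by positivity
  have hn1 : (n:ℝ)+1 ≠ 0 := by positivity
  set a : ℝ := ((n:ℝ)+1)*((n:ℝ)+2)/6 with ha
  have key : ∀ r : ℝ, (frk n (r+1))^2 =
      ((a - n)^2 + (2*(1-(n:ℝ))*(a-n))*r + ((1-(n:ℝ))^2+2*(a-n))*r^2
        + (2*(1-(n:ℝ)))*r^3 + r^4) / (n*(n+1))^2 := by
    intro r; unfold frk; rw [ha]; field_simp; ring
  simp only [key]
  rw [← Finset.sum_div]
  rw [Finset.sum_add_distrib, Finset.sum_add_distrib, Finset.sum_add_distrib,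
    Finset.sum_add_distrib, ← Finset.mul_sum, ← Finset.mul_sum, ← Finset.mul_sum,
    Finset.sum_const, Finset.card_range, sum_pow1, sum_pow2, sum_pow3, sum_pow4]
  rw [ha]
  field_simp
  ring

def rkc {n : ℕ} (x : Fin n → ℝ) (i : Fin n) : ℕ :=
  (Finset.univ.filter fun j => x j ≤ x i).card

lemma rkc_sum {n : ℕ} (x : Fin n → ℝ) (i : Fin n) :
    (∑ j : Fin n, if x j ≤ x i then (1:ℝ) else 0) = (rkc x i : ℝ) := by
  rw [Finset.sum_boole]; rfl

lemma rkc_pos {n : ℕ} (x : Fin n → ℝ) (i : Fin n) : 1 ≤ rkc x i := by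
  rw [Nat.succ_le_iff]
  unfold rkc
  rw [Finset.card_pos]
  exact ⟨i, by simp⟩

lemma rkc_le {n : ℕ} (x : Fin n → ℝ) (i : Fin n) : rkc x i ≤ n := by
  exact (Finset.card_filter_le Finset.univ fun j => x j ≤ x i).trans (by simp)

lemma rkc_lt_of_lt {n : ℕ} (x : Fin n → ℝ) {i j : Fin n} (h : x i < x j) :
    rkc x i < rkc x j := by
  apply Finset.card_lt_card
  constructor
  · intro k hk
    simp only [Finset.mem_filter, Finset.mem_univ, true_and] at hk ⊢
    exact le_trans hk h.le
  · intro hsub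
    have := hsub (Finset.mem_filter.2 ⟨Finset.mem_univ j, le_rfl⟩)
    simp only [Finset.mem_filter, Finset.mem_univ, true_and] at this
    exact absurd this (not_le.2 h)

lemma rkc_injective {n : ℕ} (x : Fin n → ℝ) (hx : Function.Injective x) :
    Function.Injective (rkc x) := by
  intro i j hij
  by_contra hne
  rcases lt_trichotomy (x i) (x j) with h | h | h
  · exact absurd hij (Nat.ne_of_lt (rkc_lt_of_lt x h))
  · exact hne (hx h)
  · exact absurd hij.symm (Nat.ne_of_lt (rkc_lt_of_lt x h))

lemma rkc_surj {n : ℕ} (x : Fin n → ℝ) (hx : Function.Injective x)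
    {r : ℕ} (h1 : 1 ≤ r) (h2 : r ≤ n) : ∃! i : Fin n, rkc x i = r := by
  have hinj := rkc_injective x hx
  -- image of univ under rkc has card n and is contained in Icc 1 n of card n
  have himg : Finset.image (rkc x) Finset.univ = Finset.Icc 1 n := by
    apply Finset.eq_of_subset_of_card_le
    · intro r hr
      simp only [Finset.mem_image, Finset.mem_univ, true_and] at hr
      obtain ⟨i, rfl⟩ := hr
      exact Finset.mem_Icc.2 ⟨rkc_pos x i, rkc_le x i⟩
    · rw [Finset.card_image_of_injective _ hinj, Nat.card_Icc]
      simp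
  have : r ∈ Finset.image (rkc x) Finset.univ := by
    rw [himg]; exact Finset.mem_Icc.2 ⟨h1, h2⟩
  simp only [Finset.mem_image, Finset.mem_univ, true_and] at this
  obtain ⟨i, hi⟩ := this
  exact ⟨i, hi, fun j hj => hinj (hj.trans hi.symm)⟩

lemma rkc_comp_perm {n : ℕ} (x : Fin n → ℝ) (σ : Equiv.Perm (Fin n)) (i : Fin n) :
    rkc (x ∘ σ) i = rkc x (σ i) := by
  unfold rkc
  simp only [Function.comp]
  rw [← Finset.card_image_of_injective (Finset.univ.filter fun j => x (σ j) ≤ x (σ i)) σ.injective]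
  congr 1
  ext k
  simp only [Finset.mem_image, Finset.mem_filter, Finset.mem_univ, true_and]
  constructor
  · rintro ⟨a, ha, rfl⟩; exact ha
  · intro hk; exact ⟨σ.symm k, by simpa using hk, by simp⟩

 section MeasAux
variable {Ω : Type} [MeasurableSpace Ω] {P : Measure Ω} [IsProbabilityMeasure P]

lemma singleton_null {f : Ω → ℝ} (hm : Measurable f)
    (hc : Continuous fun t : ℝ => (P {ω | f ω ≤ t}).toReal) (t : ℝ) :
    Measure.map f P {t} = 0 := by
  set μ := Measure.map f P with hμ
  have hprob : IsProbabilityMeasure μ := Measure.isProbabilityMeasure_map hm.aemeasurable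
  set F : ℝ → ℝ := fun t => (P {ω | f ω ≤ t}).toReal with hF
  have hIic : ∀ s : ℝ, μ (Set.Iic s) = P {ω | f ω ≤ s} := by
    intro s
    rw [hμ, Measure.map_apply hm measurableSet_Iic]
    rfl
  have key : ∀ s : ℝ, s < t → (μ {t}).toReal ≤ F t - F s := by
    intro s hs
    have hsub : Set.Iic s ⊆ Set.Iic t := Set.Iic_subset_Iic.2 hs.le
    have hdisj : Disjoint (Set.Iic s) (Set.Ioc s t) := Set.Iic_disjoint_Ioc le_rfl
    have hunion : Set.Iic s ∪ Set.Ioc s t = Set.Iic t := Set.Iic_union_Ioc_eq_Iic hs.le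
    have hadd : μ (Set.Iic t) = μ (Set.Iic s) + μ (Set.Ioc s t) := by
      rw [← hunion, measure_union hdisj measurableSet_Ioc]
    have h2 : (μ (Set.Ioc s t)).toReal = F t - F s := by
      have ht1 : μ (Set.Iic s) ≠ ⊤ := measure_ne_top _ _
      have ht2 : μ (Set.Ioc s t) ≠ ⊤ := measure_ne_top _ _
      have := congrArg ENNReal.toReal hadd
      rw [ENNReal.toReal_add ht1 ht2, hIic, hIic] at this
      simp only [hF]
      linarith
    have h3 : μ {t} ≤ μ (Set.Ioc s t) := by
      apply measure_mono
      intro x hx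
      simp only [Set.mem_singleton_iff] at hx
      subst hx
      exact Set.mem_Ioc.2 ⟨hs, le_rfl⟩
    calc (μ {t}).toReal ≤ (μ (Set.Ioc s t)).toReal :=
          ENNReal.toReal_mono (measure_ne_top _ _) h3
      _ = F t - F s := h2
  have hzero : (μ {t}).toReal = 0 := by
    by_contra h
    have hpos : 0 < (μ {t}).toReal := lt_of_le_of_ne ENNReal.toReal_nonneg (Ne.symm h)
    obtain ⟨δ, hδ, hδ'⟩ := Metric.continuous_iff.1 hc t ((μ {t}).toReal) hpos
    have hlt : dist (t - δ/2) t < δ := by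
      rw [Real.dist_eq]; rw [abs_of_nonpos (by linarith)]; linarith
    have := hδ' (t - δ/2) hlt
    rw [Real.dist_eq, abs_lt] at this
    have := key (t - δ/2) (by linarith)
    simp only [hF] at this
    linarith [this]
  have : μ {t} ≠ ⊤ := measure_ne_top _ _
  exact (ENNReal.toReal_eq_zero_iff _).1 hzero |>.resolve_right this

lemma ties_null {n : ℕ} {X : Fin n → Ω → ℝ} (hm : ∀ i, Measurable (X i))
    (hind : iIndepFun X P)
    (hcdf : ∀ i : Fin n, Continuous fun t : ℝ => (P {ω | X i ω ≤ t}).toReal)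
    {a b : Fin n} (hab : a ≠ b) :
    P {ω | X a ω = X b ω} = 0 := by
  have hifun : IndepFun (X a) (X b) P := hind.indepFun hab
  have hmap : Measure.map (fun ω => (X a ω, X b ω)) P
      = (Measure.map (X a) P).prod (Measure.map (X b) P) :=
    (indepFun_iff_map_prod_eq_prod_map_map (hm a).aemeasurable (hm b).aemeasurable).1 hifun
  have hdiag : MeasurableSet {p : ℝ × ℝ | p.1 = p.2} :=
    isClosed_eq continuous_fst continuous_snd |>.measurableSet
  have hpair : Measurable (fun ω => (X a ω, X b ω)) := (hm a).prodMk (hm b)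
  have h1 : P {ω | X a ω = X b ω}
      = ((Measure.map (X a) P).prod (Measure.map (X b) P)) {p : ℝ × ℝ | p.1 = p.2} := by
    rw [← hmap, Measure.map_apply hpair hdiag]
    rfl
  rw [h1]
  have hb : IsProbabilityMeasure (Measure.map (X b) P) :=
    Measure.isProbabilityMeasure_map (hm b).aemeasurable
  rw [Measure.prod_apply hdiag]
  have : ∀ x : ℝ, (Measure.map (X b) P) (Prod.mk x ⁻¹' {p : ℝ × ℝ | p.1 = p.2}) = 0 := by
    intro x
    have : (Prod.mk x ⁻¹' {p : ℝ × ℝ | p.1 = p.2}) = {x} := by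
      ext y; simp [eq_comm]
    rw [this]
    exact singleton_null (hm b) (hcdf b) x
  simp only [this]
  simp

lemma joint_law_eq_pi {n : ℕ} {X : Fin n → Ω → ℝ} (hm : ∀ i, Measurable (X i))
    (hind : iIndepFun X P)
    (hident : ∀ i j : Fin n, Measure.map (X i) P = Measure.map (X j) P) (i₀ : Fin n) :
    Measure.map (fun ω i => X i ω) P = Measure.pi (fun _ : Fin n => Measure.map (X i₀) P) := by
  have hT : Measurable (fun ω (i : Fin n) => X i ω) := measurable_pi_lambda _ hm
  refine (Measure.pi_eq fun s hs => ?_).symm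
  rw [Measure.map_apply hT (MeasurableSet.univ_pi hs)]
  have hpre : (fun ω (i : Fin n) => X i ω) ⁻¹' Set.pi Set.univ s = ⋂ i, X i ⁻¹' s i := by
    ext ω; simp [Set.mem_pi]
  rw [hpre, hind.meas_iInter (fun i => ⟨s i, hs i, rfl⟩)]
  refine Finset.prod_congr rfl fun i _ => ?_
  rw [hident i₀ i, Measure.map_apply (hm i) (hs i)]

lemma pi_perm_inv {μ : Measure ℝ} [IsProbabilityMeasure μ] {n : ℕ} (σ : Equiv.Perm (Fin n)) :
    Measure.map (fun x : Fin n → ℝ => x ∘ σ) (Measure.pi (fun _ : Fin n => μ))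
      = Measure.pi (fun _ : Fin n => μ) := by
  have hmeas : Measurable (fun x : Fin n → ℝ => x ∘ σ) :=
    measurable_pi_lambda _ fun i => measurable_pi_apply (σ i)
  refine (Measure.pi_eq fun s hs => ?_).symm
  rw [Measure.map_apply hmeas (MeasurableSet.univ_pi hs)]
  have hpre : (fun x : Fin n → ℝ => x ∘ σ) ⁻¹' Set.pi Set.univ s
      = Set.pi Set.univ (fun j => s (σ.symm j)) := by
    ext x
    simp only [Set.mem_preimage, Set.mem_pi, Set.mem_univ, true_implies, Function.comp]
    exact ⟨fun h j => by simpa using h (σ.symm j), fun h i => by simpa using h (σ i)⟩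
  rw [hpre, Measure.pi_pi]
  exact Equiv.prod_comp σ.symm fun j => μ (s j)
end MeasAux




/-- the rank-pair event in sequence space -/
def Aev (n : ℕ) (i j : Fin n) (r s : ℕ) : Set (Fin n → ℝ) :=
  {x | rkc x i = r ∧ rkc x j = s}

lemma measurable_rkc_real {n : ℕ} (i : Fin n) :
    Measurable (fun x : Fin n → ℝ => (rkc x i : ℝ)) := by
  have : (fun x : Fin n → ℝ => (rkc x i : ℝ))
      = fun x => ∑ j : Fin n, if x j ≤ x i then (1:ℝ) else 0 := by
    funext x
    rw [Finset.sum_boole]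
    rfl
  rw [this]
  exact Finset.measurable_sum _ fun j _ =>
    Measurable.ite (measurableSet_le (measurable_pi_apply j) (measurable_pi_apply i))
      measurable_const measurable_const

lemma measurable_Aev {n : ℕ} (i j : Fin n) (r s : ℕ) : MeasurableSet (Aev n i j r s) := by
  have h1 : Aev n i j r s
      = (fun x : Fin n → ℝ => (rkc x i : ℝ)) ⁻¹' {(r:ℝ)}
        ∩ (fun x : Fin n → ℝ => (rkc x j : ℝ)) ⁻¹' {(s:ℝ)} := by
    ext x
    simp only [Aev, Set.mem_setOf_eq, Set.mem_inter_iff, Set.mem_preimage,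
      Set.mem_singleton_iff, Nat.cast_inj]
  rw [h1]
  exact ((measurable_rkc_real i) (measurableSet_singleton _)).inter
    ((measurable_rkc_real j) (measurableSet_singleton _))

lemma Aev_perm {μ : Measure ℝ} [IsProbabilityMeasure μ] {n : ℕ}
    (σ : Equiv.Perm (Fin n)) (i j : Fin n) (r s : ℕ) :
    Measure.pi (fun _ : Fin n => μ) (Aev n i j r s)
      = Measure.pi (fun _ : Fin n => μ) (Aev n (σ i) (σ j) r s) := by
  conv_lhs => rw [← pi_perm_inv (μ := μ) σ]
  rw [Measure.map_apply (measurable_pi_lambda (fun (x : Fin n → ℝ) => x ∘ ⇑σ)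
    fun k => measurable_pi_apply (σ k)) (measurable_Aev i j r s)]
  congr 1
  ext x
  simp only [Set.mem_preimage, Aev, Set.mem_setOf_eq, rkc_comp_perm]

/-- any two distinct pairs can be matched by a permutation -/
lemma exists_perm_pair {n : ℕ} {i j i' j' : Fin n} (hij : i ≠ j) (hij' : i' ≠ j') :
    ∃ σ : Equiv.Perm (Fin n), σ i = i' ∧ σ j = j' := by
  classical
  refine ⟨(Equiv.swap i i').trans (Equiv.swap (Equiv.swap i i' j) j'), ?_, ?_⟩
  · simp only [Equiv.trans_apply, Equiv.swap_apply_left]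
    have h1 : Equiv.swap i i' j ≠ i' := fun h => hij ((Equiv.swap i i').injective
      (by rw [h, Equiv.swap_apply_left]))
    rw [Equiv.swap_apply_of_ne_of_ne (Ne.symm h1) hij']
  · simp only [Equiv.trans_apply, Equiv.swap_apply_left]










/-- the set of vectors with a tie -/
def NT (n : ℕ) : Set (Fin n → ℝ) :=
  ⋃ p : Fin n × Fin n, if p.1 = p.2 then (∅ : Set (Fin n → ℝ)) else {x | x p.1 = x p.2}

lemma measurable_NT (n : ℕ) : MeasurableSet (NT n) := by
  apply MeasurableSet.iUnion
  intro p
  by_cases h : p.1 = p.2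
  · simp [h]
  · simp only [h, if_false]
    exact measurableSet_eq_fun (measurable_pi_apply p.1) (measurable_pi_apply p.2)

lemma mem_NT_compl {n : ℕ} (x : Fin n → ℝ) : x ∈ (NT n)ᶜ ↔ Function.Injective x := by
  simp only [NT, Set.mem_compl_iff, Set.mem_iUnion, not_exists]
  constructor
  · intro h a b hab
    by_contra hne
    have := h (a, b)
    simp only [hne, if_false, Set.mem_setOf_eq] at this
    exact this hab
  · intro hinj p
    by_cases h : p.1 = p.2
    · simp [h]
    · simp only [h, if_false, Set.mem_setOf_eq]
      exact fun he => h (hinj he)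

section ProbLemmas
variable {μ : Measure ℝ} [IsProbabilityMeasure μ] {n : ℕ}
  (hD : ∀ a b : Fin n, a ≠ b → Measure.pi (fun _ : Fin n => μ) {x | x a = x b} = 0)

set_option linter.unusedSectionVars false
include hD

local notation "π" => Measure.pi (fun _ : Fin n => μ)

lemma NT_null : π (NT n) = 0 := by
  apply measure_iUnion_null
  intro p
  by_cases h : p.1 = p.2
  · simp [h]
  · simp only [h, if_false]
    exact hD p.1 p.2 h

lemma NT_compl_one : π (NT n)ᶜ = 1 := by
  rw [measure_compl (measurable_NT n) (measure_ne_top _ _), NT_null hD, measure_univ, tsub_zero]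

lemma Aev_inter_NT {i j : Fin n} {r s : ℕ} :
    π (Aev n i j r s ∩ (NT n)ᶜ) = π (Aev n i j r s) :=
  measure_inter_conull (by simpa using NT_null hD)

/-- probability that ranks of two fixed distinct coordinates take given distinct
admissible values -/
lemma prob_pair (hn : 2 ≤ n) {i j : Fin n} (hij : i ≠ j) {r s : ℕ}
    (hr1 : 1 ≤ r) (hr2 : r ≤ n) (hs1 : 1 ≤ s) (hs2 : s ≤ n) (hrs : r ≠ s) :
    π (Aev n i j r s) = (↑(n * (n-1)))⁻¹ := by
  classical
  set G := (NT n)ᶜ with hG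
  -- the union over distinct pairs
  have hdisj : (↑(Finset.univ.offDiag : Finset (Fin n × Fin n)) : Set (Fin n × Fin n)).PairwiseDisjoint
      (fun p : Fin n × Fin n => Aev n p.1 p.2 r s ∩ G) := by
    intro p hp q hq hpq
    simp only [Function.onFun, Set.disjoint_left]
    intro x hx hx'
    obtain ⟨⟨hx1, hx2⟩, hxG⟩ := hx
    obtain ⟨⟨hy1, hy2⟩, _⟩ := hx'
    have hinj := rkc_injective x ((mem_NT_compl x).1 hxG)
    exact hpq (Prod.ext (hinj (hx1.trans hy1.symm)) (hinj (hx2.trans hy2.symm)))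
  have hmeasAG : ∀ p ∈ (Finset.univ.offDiag : Finset (Fin n × Fin n)),
      MeasurableSet (Aev n p.1 p.2 r s ∩ G) := fun p _ =>
    (measurable_Aev p.1 p.2 r s).inter (measurable_NT n).compl
  have hunion : (⋃ p ∈ (Finset.univ.offDiag : Finset (Fin n × Fin n)),
      Aev n p.1 p.2 r s ∩ G) = G := by
    apply Set.Subset.antisymm
    · intro x hx
      simp only [Set.mem_iUnion] at hx
      obtain ⟨p, _, _, hxG⟩ := hx
      exact hxG
    · intro x hxG
      have hinj := (mem_NT_compl x).1 hxG
      obtain ⟨a, ha, -⟩ := rkc_surj x hinj hr1 hr2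
      obtain ⟨b, hb, -⟩ := rkc_surj x hinj hs1 hs2
      have hab : a ≠ b := fun h => hrs (ha ▸ hb ▸ h ▸ rfl)
      simp only [Set.mem_iUnion]
      exact ⟨(a, b), Finset.mem_offDiag.2 ⟨Finset.mem_univ _, Finset.mem_univ _, hab⟩,
        ⟨ha, hb⟩, hxG⟩
  have hsum : ∑ p ∈ (Finset.univ.offDiag : Finset (Fin n × Fin n)),
      π (Aev n p.1 p.2 r s ∩ G) = 1 := by
    rw [← measure_biUnion_finset hdisj hmeasAG, hunion, hG, NT_compl_one hD]
  have hall : ∀ p ∈ (Finset.univ.offDiag : Finset (Fin n × Fin n)),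
      π (Aev n p.1 p.2 r s ∩ G) = π (Aev n i j r s) := by
    intro p hp
    rw [Aev_inter_NT hD]
    obtain ⟨-, -, hp12⟩ := Finset.mem_offDiag.1 hp
    obtain ⟨σ, hσ1, hσ2⟩ := exists_perm_pair hij hp12
    rw [← hσ1, ← hσ2]
    exact (Aev_perm σ i j r s).symm
  rw [Finset.sum_congr rfl hall, Finset.sum_const] at hsum
  have hcard : (Finset.univ.offDiag : Finset (Fin n × Fin n)).card = n * (n-1) := by
    rw [Finset.offDiag_card, Finset.card_univ, Fintype.card_fin]
    cases n with
    | zero => rfl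
    | succ m =>
      rw [Nat.succ_sub_one]
      have h : (m+1)*(m+1) = (m+1)*m + (m+1) := by ring
      rw [h, Nat.add_sub_cancel]
  rw [hcard] at hsum
  have hc0 : ((n * (n-1) : ℕ) : ENNReal) ≠ 0 := by
    simp only [ne_eq, Nat.cast_eq_zero, Nat.mul_eq_zero, not_or]
    omega
  have hctop : ((n * (n-1) : ℕ) : ENNReal) ≠ ⊤ := ENNReal.natCast_ne_top _
  calc π (Aev n i j r s)
      = (↑(n * (n-1)))⁻¹ * ((n * (n-1) : ℕ) • π (Aev n i j r s)) := by
        rw [nsmul_eq_mul, ← mul_assoc, ENNReal.inv_mul_cancel hc0 hctop, one_mul]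
    _ = (↑(n * (n-1)))⁻¹ := by rw [hsum, mul_one]

/-- probability that the rank of a fixed coordinate takes a given admissible value -/
lemma prob_single (hn : 2 ≤ n) (i : Fin n) {r : ℕ} (hr1 : 1 ≤ r) (hr2 : r ≤ n) :
    π (Aev n i i r r) = (↑n)⁻¹ := by
  classical
  set G := (NT n)ᶜ with hG
  have hdisj : (↑(Finset.univ : Finset (Fin n)) : Set (Fin n)).PairwiseDisjoint
      (fun a : Fin n => Aev n a a r r ∩ G) := by
    intro p hp q hq hpq
    simp only [Function.onFun, Set.disjoint_left]
    intro x hx hx'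
    obtain ⟨⟨hx1, -⟩, hxG⟩ := hx
    obtain ⟨⟨hy1, -⟩, -⟩ := hx'
    have hinj := rkc_injective x ((mem_NT_compl x).1 hxG)
    exact hpq (hinj (hx1.trans hy1.symm))
  have hunion : (⋃ a ∈ (Finset.univ : Finset (Fin n)), Aev n a a r r ∩ G) = G := by
    apply Set.Subset.antisymm
    · intro x hx
      simp only [Set.mem_iUnion] at hx
      obtain ⟨a, _, _, hxG⟩ := hx
      exact hxG
    · intro x hxG
      have hinj := (mem_NT_compl x).1 hxG
      obtain ⟨a, ha, -⟩ := rkc_surj x hinj hr1 hr2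
      simp only [Set.mem_iUnion]
      exact ⟨a, Finset.mem_univ _, ⟨ha, ha⟩, hxG⟩
  have hsum : ∑ a : Fin n, π (Aev n a a r r ∩ G) = 1 := by
    rw [← measure_biUnion_finset hdisj (fun a _ =>
      (measurable_Aev a a r r).inter (measurable_NT n).compl), hunion, hG, NT_compl_one hD]
  have hall : ∀ a ∈ (Finset.univ : Finset (Fin n)),
      π (Aev n a a r r ∩ G) = π (Aev n i i r r) := by
    intro a _
    rw [Aev_inter_NT hD]
    have := Aev_perm (μ := μ) (Equiv.swap i a) i i r r
    rw [Equiv.swap_apply_left] at this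
    exact this.symm
  rw [Finset.sum_congr rfl hall, Finset.sum_const, Finset.card_univ, Fintype.card_fin] at hsum
  have hc0 : ((n : ℕ) : ENNReal) ≠ 0 := by
    simp only [ne_eq, Nat.cast_eq_zero]; omega
  calc π (Aev n i i r r)
      = (↑n)⁻¹ * ((n : ℕ) • π (Aev n i i r r)) := by
        rw [nsmul_eq_mul, ← mul_assoc, ENNReal.inv_mul_cancel hc0 (ENNReal.natCast_ne_top _),
          one_mul]
    _ = (↑n)⁻¹ := by rw [hsum, mul_one]

/-- two distinct coordinates cannot share a rank value, almost surely -/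
lemma prob_pair_eq_zero {i j : Fin n} (hij : i ≠ j) (r : ℕ) :
    π (Aev n i j r r) = 0 := by
  rw [← Aev_inter_NT hD]
  have : Aev n i j r r ∩ (NT n)ᶜ = ∅ := by
    ext x
    simp only [Set.mem_inter_iff, Set.mem_empty_iff_false, iff_false, not_and]
    rintro ⟨h1, h2⟩ hxG
    exact hij (rkc_injective x ((mem_NT_compl x).1 hxG) (h1.trans h2.symm))
  rw [this, measure_empty]

end ProbLemmas

lemma itil_eq {Ω : Type} {n : ℕ} (hn : 2 ≤ n) (X : Fin n → Ω → ℝ) (i : Fin n) (ω : Ω) :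
    Itil1 X i i ω = frk n (rank1 X i ω) := by
  have hn0 : (n:ℝ) ≠ 0 := by positivity
  have hn1 : (n:ℝ)+1 ≠ 0 := by positivity
  simp only [Itil1, if_pos rfl, ↓reduceIte, I1, max_self, frk]
  field_simp
  ring

lemma pick {n k : ℕ} (h1 : 1 ≤ k) (h2 : k ≤ n) (g : ℕ → ℝ) :
    ∑ r ∈ Finset.range n, (if k = r+1 then g r else 0) = g (k-1) := by
  rw [Finset.sum_eq_single (k-1)]
  · rw [if_pos (by omega)]
  · intro r _ hr
    rw [if_neg (by omega)]
  · intro h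
    exact absurd (Finset.mem_range.2 (by omega)) h

lemma final_sum (n : ℕ) (hn : 2 ≤ n) (c1 c2 : ℝ) :
    ∑ r ∈ Finset.range n, ∑ s ∈ Finset.range n,
      (if r = s then c1 else c2) * (frk n ((r:ℝ)+1) * frk n ((s:ℝ)+1))
    = (c1 - c2) * ∑ r ∈ Finset.range n, (frk n ((r:ℝ)+1))^2 := by
  have inner : ∀ r ∈ Finset.range n, ∑ s ∈ Finset.range n,
      (if r = s then c1 else c2) * (frk n ((r:ℝ)+1) * frk n ((s:ℝ)+1))
      = (c1 - c2) * (frk n ((r:ℝ)+1))^2 := by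
    intro r hr
    have hterm : ∀ s ∈ Finset.range n,
        (if r = s then c1 else c2) * (frk n ((r:ℝ)+1) * frk n ((s:ℝ)+1))
        = (c2 * frk n ((r:ℝ)+1)) * frk n ((s:ℝ)+1)
          + (if r = s then (c1 - c2) * (frk n ((r:ℝ)+1) * frk n ((s:ℝ)+1)) else 0) := by
      intro s _
      by_cases h : r = s
      · rw [if_pos h, if_pos h]; ring
      · rw [if_neg h, if_neg h]; ring
    rw [Finset.sum_congr rfl hterm, Finset.sum_add_distrib, ← Finset.mul_sum, sum_frk n hn,
      mul_zero, zero_add, Finset.sum_ite_eq, if_pos hr]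
    ring
  rw [Finset.sum_congr rfl inner, ← Finset.mul_sum]

/-- For all `i, j ∈ {1,…,n}`: `E[Ĩ_{i,i}·Ĩ_{j,j}]` equals
`(n−2)(n−1)(n+2)/(180n²(n+1))` if `i = j`, and `−(n−2)(n+2)/(180n²(n+1))` if `i ≠ j`. -/
theorem stmt_12
    (n : ℕ) (hn : 2 ≤ n)
    (Ω : Type) [MeasurableSpace Ω]
    (P : Measure Ω) [IsProbabilityMeasure P]
    (X : Fin n → Ω → ℝ) (hX : IID1 X P) :
    ∀ i j : Fin n,
      ∫ ω, Itil1 X i i ω * Itil1 X j j ω ∂ P =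
        if i = j then
          ((n : ℝ) - 2) * ((n : ℝ) - 1) * ((n : ℝ) + 2) /
            (180 * (n : ℝ) ^ 2 * ((n : ℝ) + 1))
        else
          -(((n : ℝ) - 2) * ((n : ℝ) + 2) /
            (180 * (n : ℝ) ^ 2 * ((n : ℝ) + 1))) := by
  classical
  obtain ⟨hm, hind, hident, hcdf⟩ := hX
  intro i j
  have hn0 : (n:ℝ) ≠ 0 := by positivity
  have hn1R : (n:ℝ)+1 ≠ 0 := by positivity
  -- setup
  set Xv : Ω → (Fin n → ℝ) := fun ω k => X k ω with hXv
  have hXvm : Measurable Xv := measurable_pi_lambda _ hm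
  have i₀ : Fin n := ⟨0, by omega⟩
  set μ : Measure ℝ := Measure.map (X i₀) P with hμ
  have hμprob : IsProbabilityMeasure μ := Measure.isProbabilityMeasure_map (hm i₀).aemeasurable
  have hlaw : Measure.map Xv P = Measure.pi (fun _ : Fin n => μ) :=
    joint_law_eq_pi hm hind hident i₀
  -- the diagonal events are null in the sequence space
  have hD : ∀ a b : Fin n, a ≠ b → Measure.pi (fun _ : Fin n => μ) {x | x a = x b} = 0 := by
    intro a b hab
    have hDm : MeasurableSet {x : Fin n → ℝ | x a = x b} :=
      measurableSet_eq_fun (measurable_pi_apply a) (measurable_pi_apply b)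
    rw [← hlaw, Measure.map_apply hXvm hDm]
    exact ties_null hm hind hcdf hab
  -- probabilities of rank events in Ω
  have hPA : ∀ (a b : Fin n) (r s : ℕ),
      P (Xv ⁻¹' (Aev n a b r s)) = Measure.pi (fun _ : Fin n => μ) (Aev n a b r s) := by
    intro a b r s
    rw [← hlaw, Measure.map_apply hXvm (measurable_Aev a b r s)]
  -- pointwise expansion of the integrand
  have hrank : ∀ (a : Fin n) (ω : Ω), rank1 X a ω = (rkc (Xv ω) a : ℝ) := by
    intro a ω
    exact rkc_sum (Xv ω) a
  set c : ℕ → ℕ → ℝ := fun r s => frk n ((r:ℝ)+1) * frk n ((s:ℝ)+1) with hc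
  set S : ℕ → ℕ → Set Ω := fun r s => Xv ⁻¹' (Aev n i j (r+1) (s+1)) with hS
  have hSm : ∀ r s, MeasurableSet (S r s) := fun r s => hXvm (measurable_Aev i j _ _)
  have hpt : ∀ ω, Itil1 X i i ω * Itil1 X j j ω
      = ∑ r ∈ Finset.range n, ∑ s ∈ Finset.range n,
          (S r s).indicator (fun _ => c r s) ω := by
    intro ω
    have hki1 : 1 ≤ rkc (Xv ω) i := rkc_pos _ _
    have hki2 : rkc (Xv ω) i ≤ n := rkc_le _ _
    have hkj1 : 1 ≤ rkc (Xv ω) j := rkc_pos _ _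
    have hkj2 : rkc (Xv ω) j ≤ n := rkc_le _ _
    have hind1 : ∀ r s, (S r s).indicator (fun _ => c r s) ω
        = if rkc (Xv ω) i = r+1 then (if rkc (Xv ω) j = s+1 then c r s else 0) else 0 := by
      intro r s
      rw [Set.indicator_apply]
      by_cases h1 : rkc (Xv ω) i = r+1 <;> by_cases h2 : rkc (Xv ω) j = s+1 <;>
        simp [hS, Aev, Set.mem_preimage, Set.mem_setOf_eq, h1, h2]
    simp only [hind1]
    have hout : ∀ r, (∑ s ∈ Finset.range n,
        if rkc (Xv ω) i = r+1 then (if rkc (Xv ω) j = s+1 then c r s else 0) else 0)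
        = if rkc (Xv ω) i = r+1
          then (∑ s ∈ Finset.range n, if rkc (Xv ω) j = s+1 then c r s else 0) else 0 := by
      intro r
      by_cases h : rkc (Xv ω) i = r+1 <;> simp [h]
    simp only [hout]
    rw [pick hki1 hki2, pick hkj1 hkj2]
    rw [itil_eq hn X i ω, itil_eq hn X j ω, hrank, hrank]
    simp only [hc]
    have e1 : ((rkc (Xv ω) i - 1 : ℕ) : ℝ) + 1 = (rkc (Xv ω) i : ℝ) := by
      rw [Nat.cast_sub hki1]; push_cast; ring
    have e2 : ((rkc (Xv ω) j - 1 : ℕ) : ℝ) + 1 = (rkc (Xv ω) j : ℝ) := by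
      rw [Nat.cast_sub hkj1]; push_cast; ring
    rw [e1, e2]
  -- compute the integral
  have hint : ∫ ω, Itil1 X i i ω * Itil1 X j j ω ∂ P
      = ∑ r ∈ Finset.range n, ∑ s ∈ Finset.range n,
          (P (S r s)).toReal * c r s := by
    rw [integral_congr_ae (Filter.Eventually.of_forall hpt)]
    rw [integral_finset_sum _ (fun r _ => integrable_finset_sum _ (fun s _ =>
      (integrable_const (c r s)).indicator (hSm r s)))]
    refine Finset.sum_congr rfl fun r _ => ?_
    rw [integral_finset_sum _ (fun s _ => (integrable_const (c r s)).indicator (hSm r s))]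
    refine Finset.sum_congr rfl fun s _ => ?_
    rw [integral_indicator_const _ (hSm r s)]
    simp [mul_comm, Measure.real]
  rw [hint]
  -- the probability values
  by_cases hij : i = j
  · subst hij
    have hval : ∀ r ∈ Finset.range n, ∀ s ∈ Finset.range n,
        (P (S r s)).toReal = if r = s then 1/(n:ℝ) else 0 := by
      intro r hr s hs
      by_cases hrs : r = s
      · subst hrs
        have hr' := Finset.mem_range.1 hr
        rw [hS, hPA, prob_single hD hn i (by omega) (by omega : r+1 ≤ n)]
        simp [ENNReal.toReal_inv]
      · have : Aev n i i (r+1) (s+1) = ∅ := by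
          ext x
          simp only [Aev, Set.mem_setOf_eq, Set.mem_empty_iff_false, iff_false, not_and]
          intro h1 h2
          exact hrs (by omega)
        rw [hS, hPA, this]
        simp [hrs]
    have : ∑ r ∈ Finset.range n, ∑ s ∈ Finset.range n, (P (S r s)).toReal * c r s
        = ∑ r ∈ Finset.range n, ∑ s ∈ Finset.range n,
            (if r = s then 1/(n:ℝ) else 0) * (frk n ((r:ℝ)+1) * frk n ((s:ℝ)+1)) := by
      refine Finset.sum_congr rfl fun r hr => Finset.sum_congr rfl fun s hs => ?_
      rw [hval r hr s hs]
    rw [this, final_sum n hn, sum_frk_sq n hn, if_pos rfl]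
    field_simp
    ring
  · have hval : ∀ r ∈ Finset.range n, ∀ s ∈ Finset.range n,
        (P (S r s)).toReal = if r = s then 0 else 1/((n:ℝ)*((n:ℝ)-1)) := by
      intro r hr s hs
      by_cases hrs : r = s
      · subst hrs
        rw [hS, hPA, prob_pair_eq_zero hD hij]
        simp
      · rw [hS, hPA, prob_pair hD hn hij (by omega) (by
          simp only [Finset.mem_range] at hr; omega) (by omega) (by
          simp only [Finset.mem_range] at hs; omega) (by omega)]
        rw [if_neg hrs, ENNReal.toReal_inv, ENNReal.toReal_natCast]
        congr 1
        rw [Nat.cast_mul, Nat.cast_sub (by omega)]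
        push_cast
        ring
    have : ∑ r ∈ Finset.range n, ∑ s ∈ Finset.range n, (P (S r s)).toReal * c r s
        = ∑ r ∈ Finset.range n, ∑ s ∈ Finset.range n,
            (if r = s then 0 else 1/((n:ℝ)*((n:ℝ)-1))) * (frk n ((r:ℝ)+1) * frk n ((s:ℝ)+1)) := by
      refine Finset.sum_congr rfl fun r hr => Finset.sum_congr rfl fun s hs => ?_
      rw [hval r hr s hs]
    rw [this, final_sum n hn, sum_frk_sq n hn, if_neg hij]
    have hnm1 : (n:ℝ) - 1 ≠ 0 := by
      have : (2:ℝ) ≤ (n:ℝ) := by exact_mod_cast hn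
      intro h; nlinarith
    field_simp
    ring
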